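/- arXiv:math-ph/0312034 — 2 statements merged into one kernel-verified Lean document; each statement's English description precedes it below -/
import Mathlib

section
/- Let Φ₀₁(x,y) = c(x)·(−sin(φ/2)y₁ + cos(φ/2)y₂)·G(x,y) and Φ₁₀(x,y) = d(x)·(cos(φ/2)y₁ + sin(φ/2)y₂)·G(x,y) with c(x) = (1−|x|)^{1/4}, d(x) = (1+|x|)^{1/4} and G smooth. Then the rotated combinations Φ_A = sin(φ/2)Φ₀₁ − cos(φ/2)Φ₁₀ and Φ_B = cos(φ/2)Φ₀₁ + sin(φ/2)Φ₁₀ satisfy Φ_A(x,y) = G(x,y)(−y₁ − x₁y₁/4 − x₂y₂/4 + O(|x|²)) and Φ_B(x,y) = G(x,y)(y₂ + x₂y₁/4 − x₁y₂/4 + O(|x|²)) near x = 0, hence extend smoothly (to first order) through the origin. -/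
open Filter Topology Asymptotics

private lemma comb_bound {u v y1 y2 : ℝ} (hu : |u| ≤ 1) (hv : |v| ≤ 1) :
    |u * y1 + v * y2| ≤ |y1| + |y2| := by
  calc |u * y1 + v * y2| ≤ |u * y1| + |v * y2| := abs_add_le _ _
    _ = |u| * |y1| + |v| * |y2| := by rw [abs_mul, abs_mul]
    _ ≤ 1 * |y1| + 1 * |y2| := by gcongr
    _ = |y1| + |y2| := by ring

private lemma quarter_bound {t : ℝ} (ht : |t| ≤ 1/4) :
    |(1 + t) ^ ((1:ℝ)/4) - (1 + t/4)| ≤ t ^ 2 := by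
  obtain ⟨h1, h2⟩ := abs_le.1 ht
  have ht2 : t^2 ≤ 1/16 := by nlinarith
  have h0 : (0:ℝ) ≤ 1 + t := by linarith
  have hl0 : (0:ℝ) ≤ 1 + t/4 - t^2 := by nlinarith
  have hu0 : (0:ℝ) ≤ 1 + t/4 + t^2 := by nlinarith
  have hq : ((1:ℝ)/4) = ((4:ℕ):ℝ)⁻¹ := by norm_num
  have c1 : (0:ℝ) ≤ 1/4 - t := by linarith
  have c2 : (0:ℝ) ≤ 1/4 + t := by linarith
  have c3 : (0:ℝ) ≤ 1/16 - t^2 := by linarith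
  have h4 : (0:ℝ) ≤ t^4 := by positivity
  have h6 : (0:ℝ) ≤ t^6 := by positivity
  have hlow : 1 + t/4 - t^2 ≤ (1+t) ^ ((1:ℝ)/4) := by
    have hp : (1 + t/4 - t^2)^(4:ℕ) ≤ 1 + t := by
      nlinarith [mul_nonneg (sq_nonneg t) c1, mul_nonneg (sq_nonneg t) c2,
        mul_nonneg h4 c1, mul_nonneg h4 c2, mul_nonneg h6 c1, mul_nonneg h6 c2,
        mul_nonneg (sq_nonneg t) c3, mul_nonneg h4 c3, mul_nonneg h6 c3, sq_nonneg t, h4, h6]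
    calc 1 + t/4 - t^2 = ((1 + t/4 - t^2)^(4:ℕ)) ^ ((1:ℝ)/4) := by
          rw [hq, Real.pow_rpow_inv_natCast hl0 (by norm_num)]
      _ ≤ (1+t) ^ ((1:ℝ)/4) := Real.rpow_le_rpow (pow_nonneg hl0 4) hp (by norm_num)
  have hupp : (1+t) ^ ((1:ℝ)/4) ≤ 1 + t/4 + t^2 := by
    have hp : 1 + t ≤ (1 + t/4 + t^2)^(4:ℕ) := by
      nlinarith [mul_nonneg (sq_nonneg t) c1, mul_nonneg (sq_nonneg t) c2,
        mul_nonneg h4 c1, mul_nonneg h4 c2, mul_nonneg h6 c1, mul_nonneg h6 c2,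
        mul_nonneg (sq_nonneg t) c3, mul_nonneg h4 c3, mul_nonneg h6 c3, sq_nonneg t, h4, h6]
    calc (1+t) ^ ((1:ℝ)/4) ≤ ((1 + t/4 + t^2)^(4:ℕ)) ^ ((1:ℝ)/4) :=
          Real.rpow_le_rpow h0 hp (by norm_num)
      _ = 1 + t/4 + t^2 := by rw [hq, Real.pow_rpow_inv_natCast hu0 (by norm_num)]
  rw [abs_le]; constructor <;> linarith

/-- The rotated combinations `Φ_A = sin(φ/2)Φ₀₁ − cos(φ/2)Φ₁₀` and
`Φ_B = cos(φ/2)Φ₀₁ + sin(φ/2)Φ₁₀` of the half-angle eigenfunctions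
`Φ₀₁ = (1−|x|)^{1/4}(−sin(φ/2)y₁+cos(φ/2)y₂)G`, `Φ₁₀ = (1+|x|)^{1/4}(cos(φ/2)y₁+sin(φ/2)y₂)G`
satisfy `Φ_A = G·(−y₁ − x₁y₁/4 − x₂y₂/4 + O(|x|²))` and
`Φ_B = G·(y₂ + x₂y₁/4 − x₁y₂/4 + O(|x|²))` near `x = 0`. -/
theorem rotated_basis_smooth_expansion
    (G : ℝ × ℝ → ℝ × ℝ → ℝ)
    (hG : ∀ y, ContinuousAt (fun x => G x y) 0) :
    let φ : ℝ × ℝ → ℝ := fun x => Complex.arg ((x.1 : ℂ) + x.2 * Complex.I)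
    let r : ℝ × ℝ → ℝ := fun x => Real.sqrt (x.1 ^ 2 + x.2 ^ 2)
    let Φ01 : ℝ × ℝ → ℝ × ℝ → ℝ := fun x y =>
      (1 - r x) ^ ((1 : ℝ) / 4) *
        (-Real.sin (φ x / 2) * y.1 + Real.cos (φ x / 2) * y.2) * G x y
    let Φ10 : ℝ × ℝ → ℝ × ℝ → ℝ := fun x y =>
      (1 + r x) ^ ((1 : ℝ) / 4) *
        (Real.cos (φ x / 2) * y.1 + Real.sin (φ x / 2) * y.2) * G x y
    let ΦA : ℝ × ℝ → ℝ × ℝ → ℝ := fun x y =>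
      Real.sin (φ x / 2) * Φ01 x y - Real.cos (φ x / 2) * Φ10 x y
    let ΦB : ℝ × ℝ → ℝ × ℝ → ℝ := fun x y =>
      Real.cos (φ x / 2) * Φ01 x y + Real.sin (φ x / 2) * Φ10 x y
    ∀ y : ℝ × ℝ,
      (fun x : ℝ × ℝ =>
          ΦA x y - G x y * (-y.1 - x.1 * y.1 / 4 - x.2 * y.2 / 4))
        =O[𝓝 (0 : ℝ × ℝ)] (fun x => r x ^ 2) ∧
      (fun x : ℝ × ℝ =>
          ΦB x y - G x y * (y.2 + x.2 * y.1 / 4 - x.1 * y.2 / 4))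
        =O[𝓝 (0 : ℝ × ℝ)] (fun x => r x ^ 2) := by
  intro φ r Φ01 Φ10 ΦA ΦB y
  have hrabs : ∀ x : ℝ × ℝ, r x = ‖((x.1 : ℂ) + x.2 * Complex.I)‖ := by
    intro x
    rw [Complex.norm_def, Complex.normSq_apply]
    show Real.sqrt (x.1 ^ 2 + x.2 ^ 2) = _
    simp
    ring_nf
  have hcos : ∀ x : ℝ × ℝ, r x * Real.cos (φ x) = x.1 := by
    intro x
    by_cases hx : ((x.1 : ℂ) + x.2 * Complex.I) = 0
    · have h1 : x.1 = 0 := by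
        have := congrArg Complex.re hx; simpa using this
      have h2 : x.2 = 0 := by
        have := congrArg Complex.im hx; simpa using this
      show Real.sqrt (x.1 ^ 2 + x.2 ^ 2) * _ = _
      rw [h1, h2]; simp
    · have habs : ‖((x.1 : ℂ) + x.2 * Complex.I)‖ ≠ 0 := by
        simpa using hx
      show r x * Real.cos (Complex.arg _) = x.1
      rw [Complex.cos_arg hx, hrabs x]
      field_simp
      simp
  have hsin : ∀ x : ℝ × ℝ, r x * Real.sin (φ x) = x.2 := by
    intro x
    by_cases hx : ((x.1 : ℂ) + x.2 * Complex.I) = 0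
    · have h1 : x.1 = 0 := by
        have := congrArg Complex.re hx; simpa using this
      have h2 : x.2 = 0 := by
        have := congrArg Complex.im hx; simpa using this
      show Real.sqrt (x.1 ^ 2 + x.2 ^ 2) * _ = _
      rw [h1, h2]; simp
    · have habs : ‖((x.1 : ℂ) + x.2 * Complex.I)‖ ≠ 0 := by
        simpa using hx
      show r x * Real.sin (Complex.arg _) = x.2
      rw [Complex.sin_arg, hrabs x]
      field_simp
      simp
  have hx1 : ∀ x : ℝ × ℝ,
      r x * (Real.cos (φ x / 2) ^ 2 - Real.sin (φ x / 2) ^ 2) = x.1 := by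
    intro x
    have h1 := Real.cos_two_mul (φ x / 2)
    have h2 := Real.sin_sq_add_cos_sq (φ x / 2)
    rw [show 2 * (φ x / 2) = φ x by ring] at h1
    have : Real.cos (φ x / 2) ^ 2 - Real.sin (φ x / 2) ^ 2 = Real.cos (φ x) := by
      linarith
    rw [this]; exact hcos x
  have hx2 : ∀ x : ℝ × ℝ,
      r x * (2 * Real.sin (φ x / 2) * Real.cos (φ x / 2)) = x.2 := by
    intro x
    have h1 := Real.sin_two_mul (φ x / 2)
    rw [show 2 * (φ x / 2) = φ x by ring] at h1
    rw [← h1]; exact hsin x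
  have hsc : ∀ x : ℝ × ℝ, Real.sin (φ x / 2) ^ 2 + Real.cos (φ x / 2) ^ 2 = 1 :=
    fun x => Real.sin_sq_add_cos_sq _
  -- r tends to 0
  have hrc : Continuous r := by
    show Continuous fun x : ℝ × ℝ => Real.sqrt (x.1 ^ 2 + x.2 ^ 2)
    fun_prop
  have hr00 : r 0 = 0 := by
    show Real.sqrt _ = 0
    norm_num
  have hr0 : Filter.Tendsto r (𝓝 0) (𝓝 0) := by
    have := hrc.tendsto 0
    rwa [hr00] at this
  have hsmall : ∀ᶠ x in 𝓝 (0 : ℝ × ℝ), |r x| ≤ 1/4 := by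
    have h : ∀ᶠ u in 𝓝 (0:ℝ), |u| ≤ 1/4 := by
      filter_upwards [Metric.ball_mem_nhds (0:ℝ) (by norm_num : (0:ℝ) < 1/4)] with u hu
      rw [Metric.mem_ball, Real.dist_eq, sub_zero] at hu
      exact hu.le
    exact hr0.eventually h
  -- remainders are O(r^2)
  have ha : (fun x => (1 - r x) ^ ((1:ℝ)/4) - (1 - r x / 4)) =O[𝓝 (0 : ℝ × ℝ)]
      (fun x => r x ^ 2) := by
    rw [isBigO_iff]
    refine ⟨1, ?_⟩
    filter_upwards [hsmall] with x hx
    have h := quarter_bound (t := -(r x)) (by simpa using hx)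
    rw [Real.norm_eq_abs, Real.norm_eq_abs]
    calc |(1 - r x) ^ ((1:ℝ)/4) - (1 - r x / 4)|
        = |(1 + -(r x)) ^ ((1:ℝ)/4) - (1 + -(r x)/4)| := by ring_nf
      _ ≤ (-(r x))^2 := h
      _ = r x ^ 2 := by ring
      _ ≤ 1 * |r x ^ 2| := by rw [one_mul, abs_of_nonneg (sq_nonneg _)]
  have hb : (fun x => (1 + r x) ^ ((1:ℝ)/4) - (1 + r x / 4)) =O[𝓝 (0 : ℝ × ℝ)]
      (fun x => r x ^ 2) := by
    rw [isBigO_iff]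
    refine ⟨1, ?_⟩
    filter_upwards [hsmall] with x hx
    have h := quarter_bound (t := r x) hx
    rw [Real.norm_eq_abs, Real.norm_eq_abs]
    calc |(1 + r x) ^ ((1:ℝ)/4) - (1 + r x / 4)|
        ≤ (r x)^2 := h
      _ ≤ 1 * |r x ^ 2| := by rw [one_mul, abs_of_nonneg (sq_nonneg _)]
  have hGb : (fun x => G x y) =O[𝓝 (0 : ℝ × ℝ)] (fun _ => (1:ℝ)) :=
    (hG y).isBigO_one ℝ
  -- bounded weights
  have hwb : ∀ (u v : ℝ × ℝ → ℝ), (∀ x, |u x| ≤ 1) → (∀ x, |v x| ≤ 1) →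
      (fun x => u x * y.1 + v x * y.2) =O[𝓝 (0 : ℝ × ℝ)] (fun _ => (1:ℝ)) := by
    intro u v hu hv
    rw [isBigO_iff]
    refine ⟨|y.1| + |y.2|, Filter.Eventually.of_forall fun x => ?_⟩
    rw [Real.norm_eq_abs, norm_one, mul_one]
    exact comb_bound (hu x) (hv x)
  have hsin1 : ∀ x : ℝ × ℝ, |(-(Real.sin (φ x / 2) ^ 2))| ≤ 1 := by
    intro x
    rw [abs_neg, abs_pow]
    exact pow_le_one₀ (abs_nonneg _) (Real.abs_sin_le_one _)
  have hcos1 : ∀ x : ℝ × ℝ, |(-(Real.cos (φ x / 2) ^ 2))| ≤ 1 := by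
    intro x
    rw [abs_neg, abs_pow]
    exact pow_le_one₀ (abs_nonneg _) (Real.abs_cos_le_one _)
  have hsc1 : ∀ x : ℝ × ℝ, |Real.sin (φ x / 2) * Real.cos (φ x / 2)| ≤ 1 := by
    intro x
    rw [abs_mul]
    exact mul_le_one₀ (Real.abs_sin_le_one _) (abs_nonneg _) (Real.abs_cos_le_one _)
  have hsc1' : ∀ x : ℝ × ℝ, |(-(Real.sin (φ x / 2) * Real.cos (φ x / 2)))| ≤ 1 := by
    intro x; rw [abs_neg]; exact hsc1 x
  -- generic O(r^2) builder
  have hterm : ∀ (u v w : ℝ × ℝ → ℝ), (∀ x, |u x| ≤ 1) → (∀ x, |v x| ≤ 1) →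
      (w =O[𝓝 (0 : ℝ × ℝ)] fun x => r x ^ 2) →
      (fun x => G x y * (u x * y.1 + v x * y.2) * w x) =O[𝓝 (0 : ℝ × ℝ)]
        (fun x => r x ^ 2) := by
    intro u v w hu hv hw
    have h1 := (hGb.mul (hwb u v hu hv)).mul hw
    simpa using h1
  constructor
  · -- ΦA
    have hEA : ∀ x : ℝ × ℝ, ΦA x y - G x y * (-y.1 - x.1 * y.1 / 4 - x.2 * y.2 / 4)
        = G x y * (-(Real.sin (φ x / 2) ^ 2) * y.1
              + Real.sin (φ x / 2) * Real.cos (φ x / 2) * y.2)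
            * ((1 - r x) ^ ((1:ℝ)/4) - (1 - r x / 4))
          + G x y * (-(Real.cos (φ x / 2) ^ 2) * y.1
              + (-(Real.sin (φ x / 2) * Real.cos (φ x / 2))) * y.2)
            * ((1 + r x) ^ ((1:ℝ)/4) - (1 + r x / 4)) := by
      intro x
      have h1 := hx1 x
      have h2 := hx2 x
      have h3 := hsc x
      show Real.sin (φ x / 2) *
            ((1 - r x) ^ ((1 : ℝ) / 4) *
              (-Real.sin (φ x / 2) * y.1 + Real.cos (φ x / 2) * y.2) * G x y)
          - Real.cos (φ x / 2) *
            ((1 + r x) ^ ((1 : ℝ) / 4) *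
              (Real.cos (φ x / 2) * y.1 + Real.sin (φ x / 2) * y.2) * G x y)
          - G x y * (-y.1 - x.1 * y.1 / 4 - x.2 * y.2 / 4) = _
      linear_combination (-(G x y * y.1)) * h3 + (-(G x y * y.1)/4) * h1
        + (-(G x y * y.2)/4) * h2
    have h1 := hterm _ _ _ hsin1 hsc1 ha
    have h2 := hterm _ _ _ hcos1 hsc1' hb
    have := h1.add h2
    exact this.congr' (Filter.Eventually.of_forall fun x => (hEA x).symm)
      Filter.EventuallyEq.rfl
  · -- ΦB
    have hEB : ∀ x : ℝ × ℝ, ΦB x y - G x y * (y.2 + x.2 * y.1 / 4 - x.1 * y.2 / 4)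
        = G x y * ((-(Real.sin (φ x / 2) * Real.cos (φ x / 2))) * y.1
              + Real.cos (φ x / 2) ^ 2 * y.2)
            * ((1 - r x) ^ ((1:ℝ)/4) - (1 - r x / 4))
          + G x y * (Real.sin (φ x / 2) * Real.cos (φ x / 2) * y.1
              + Real.sin (φ x / 2) ^ 2 * y.2)
            * ((1 + r x) ^ ((1:ℝ)/4) - (1 + r x / 4)) := by
      intro x
      have h1 := hx1 x
      have h2 := hx2 x
      have h3 := hsc x
      show Real.cos (φ x / 2) *
            ((1 - r x) ^ ((1 : ℝ) / 4) *
              (-Real.sin (φ x / 2) * y.1 + Real.cos (φ x / 2) * y.2) * G x y)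
          + Real.sin (φ x / 2) *
            ((1 + r x) ^ ((1 : ℝ) / 4) *
              (Real.cos (φ x / 2) * y.1 + Real.sin (φ x / 2) * y.2) * G x y)
          - G x y * (y.2 + x.2 * y.1 / 4 - x.1 * y.2 / 4) = _
      linear_combination (G x y * y.2) * h3 + (-(G x y * y.2)/4) * h1
        + ((G x y * y.1)/4) * h2
    have hcos2 : ∀ x : ℝ × ℝ, |Real.cos (φ x / 2) ^ 2| ≤ 1 := by
      intro x; rw [abs_pow]; exact pow_le_one₀ (abs_nonneg _) (Real.abs_cos_le_one _)
    have hsin2 : ∀ x : ℝ × ℝ, |Real.sin (φ x / 2) ^ 2| ≤ 1 := by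
      intro x; rw [abs_pow]; exact pow_le_one₀ (abs_nonneg _) (Real.abs_sin_le_one _)
    have h1 := hterm _ _ _ hsc1' hcos2 ha
    have h2 := hterm _ _ _ hsc1 hsin2 hb
    have := h1.add h2
    exact this.congr' (Filter.Eventually.of_forall fun x => (hEB x).symm)
      Filter.EventuallyEq.rfl
end

section
/- With Φ₀₁, Φ₁₀ as the first excited eigenfunctions of the reduced Hamiltonian ĥ(x) = −(1/2)Δ_y + (1/(2a²))⟨R(x)y, y⟩ (R the Rellich matrix), the off-diagonal matrix element ⟨Φ_B(x,·), ĥ(x) Φ_A(x,·)⟩_{L²(ℝ²)} equals a⁻¹ sin(φ/2)cos(φ/2)[ω₋(x) − ω₊(x)], which equals a⁻¹(−x₂/4 + O(|x|³)) and is nonzero for all x ≠ 0 with x₂ ≠ 0. -/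
open Filter Topology Asymptotics RealInnerProductSpace

lemma sqrt_sum_bound (r p q : ℝ) (hr0 : 0 ≤ r) (_hr1 : r ≤ 1)
    (hp0 : 0 ≤ p) (hq0 : 0 ≤ q)
    (hpp : p * p = 1 - r) (hqq : q * q = 1 + r) :
    1 ≤ p + q ∧ p + q ≤ 2 ∧ 2 - (p + q) ≤ r ^ 2 := by
  have hq1 : 1 ≤ q := by nlinarith
  have hpq0 : 0 ≤ p * q := mul_nonneg hp0 hq0
  have hpqr : (p * q) * (p * q) = 1 - r ^ 2 := by
    linear_combination (q * q) * hpp + (1 - r) * hqq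
  have hpqle : p * q ≤ 1 := by nlinarith
  have hge : 1 - r ^ 2 ≤ p * q := by nlinarith [mul_nonneg hpq0 (sub_nonneg.2 hpqle)]
  refine ⟨by linarith, by nlinarith, by nlinarith⟩

lemma scalar_bound (r x₂ s p q : ℝ) (hpos : 0 < r) (hr1 : r ≤ 1)
    (hx2le : |x₂| ≤ r)
    (hs : s = x₂ / (2 * r))
    (hp0 : 0 ≤ p) (hq0 : 0 ≤ q)
    (hpp : p * p = 1 - r) (hqq : q * q = 1 + r) :
    |s * ((1 / 2) * p - (1 / 2) * q) + x₂ / 4| ≤ r ^ 3 := by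
  obtain ⟨hS1, hSle2, hkey⟩ := sqrt_sum_bound r p q hpos.le hr1 hp0 hq0 hpp hqq
  set S := p + q with hS
  have hSpos : 0 < S := by linarith
  have hpq : (p - q) * S = -2 * r := by rw [hS]; linear_combination hpp - hqq
  have hrne : r ≠ 0 := ne_of_gt hpos
  have hE : s * ((1 / 2) * p - (1 / 2) * q) + x₂ / 4 = x₂ * (S - 2) / (4 * S) := by
    rw [hs]
    have hpqd : p - q = -2 * r / S := by
      rw [eq_div_iff (ne_of_gt hSpos)]; linarith [hpq]
    have h2 : (1 / 2) * p - (1 / 2) * q = (p - q) / 2 := by ring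
    rw [h2, hpqd]
    field_simp
    ring
  rw [hE, abs_div, abs_mul]
  have habs2 : |S - 2| = 2 - S := by rw [abs_of_nonpos (by linarith)]; ring
  have habs4 : |4 * S| = 4 * S := abs_of_pos (by linarith)
  rw [habs2, habs4]
  have hstep : |x₂| * (2 - S) / (4 * S) ≤ r * r ^ 2 / 4 := by
    apply div_le_div₀ (by positivity) ?_ (by norm_num) (by linarith)
    exact mul_le_mul hx2le hkey (by linarith) hpos.le
  nlinarith [pow_nonneg hpos.le 3]

lemma aux_bound (x₁ x₂ : ℝ)
    (hle : Real.sqrt (x₁ ^ 2 + x₂ ^ 2) ≤ 1) :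
    |Real.sin (Complex.arg ((x₁ : ℂ) + x₂ * Complex.I) / 2) *
        Real.cos (Complex.arg ((x₁ : ℂ) + x₂ * Complex.I) / 2) *
        ((1 / 2) * Real.sqrt (1 - Real.sqrt (x₁ ^ 2 + x₂ ^ 2)) -
          (1 / 2) * Real.sqrt (1 + Real.sqrt (x₁ ^ 2 + x₂ ^ 2))) + x₂ / 4|
      ≤ Real.sqrt (x₁ ^ 2 + x₂ ^ 2) ^ 3 := by
  set r := Real.sqrt (x₁ ^ 2 + x₂ ^ 2) with hrdef
  have hr0 : 0 ≤ r := Real.sqrt_nonneg _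
  have hr2 : r ^ 2 = x₁ ^ 2 + x₂ ^ 2 := Real.sq_sqrt (by positivity)
  rcases eq_or_lt_of_le hr0 with h0 | hpos
  · have hx1 : x₁ = 0 := by nlinarith [sq_nonneg x₁, sq_nonneg x₂]
    have hx2 : x₂ = 0 := by nlinarith [sq_nonneg x₁, sq_nonneg x₂]
    simp [hx1, hx2, ← h0]
  · have hrne : r ≠ 0 := ne_of_gt hpos
    set θ := Complex.arg ((x₁ : ℂ) + x₂ * Complex.I) with hθ
    have habs : ‖(x₁ : ℂ) + x₂ * Complex.I‖ = r := by
      rw [Complex.norm_add_mul_I]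
    have hsin : Real.sin θ = x₂ / r := by
      rw [hθ, Complex.sin_arg, habs]; simp
    have hsc : Real.sin (θ / 2) * Real.cos (θ / 2) = x₂ / (2 * r) := by
      have := Real.sin_two_mul (θ / 2)
      rw [show 2 * (θ / 2) = θ by ring] at this
      rw [hsin, div_eq_iff hrne] at this
      rw [eq_div_iff (by positivity : (2:ℝ) * r ≠ 0)]
      linarith
    have hx2le : |x₂| ≤ r := by
      have h1 : x₂ ^ 2 ≤ x₁ ^ 2 + x₂ ^ 2 := by nlinarith [sq_nonneg x₁]
      have := Real.sqrt_le_sqrt h1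
      rwa [Real.sqrt_sq_eq_abs] at this
    exact scalar_bound r x₂ _ _ _ hpos hle hx2le hsc (Real.sqrt_nonneg _)
      (Real.sqrt_nonneg _) (Real.mul_self_sqrt (by linarith))
      (Real.mul_self_sqrt (by linarith))

/-- With `Φ₀₁, Φ₁₀` orthonormal first excited eigenfunctions of the reduced Hamiltonian
`ĥ(x)` with eigenvalues `E₀₀ + ω∓/a`, the off-diagonal matrix element of `ĥ(x)` between
the rotated basis vectors `Φ_A = sin(φ/2)Φ₀₁ − cos(φ/2)Φ₁₀`,
`Φ_B = cos(φ/2)Φ₀₁ + sin(φ/2)Φ₁₀` equals `a⁻¹ sin(φ/2)cos(φ/2)(ω₋ − ω₊)`, which is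
nonzero whenever `x ≠ 0` and `x₂ ≠ 0`, and equals `a⁻¹(−x₂/4 + O(|x|³))` near `0`. -/
theorem offdiagonal_matrix_element
    {L : Type*} [NormedAddCommGroup L] [InnerProductSpace ℝ L]
    (a : ℝ) (ha : 0 < a)
    (r φ : ℝ) (hr : 0 < r) (hr1 : r < 1)
    (x₁ x₂ : ℝ) (hx₁ : x₁ = r * Real.cos φ) (hx₂ : x₂ = r * Real.sin φ)
    (ωp ωm E00 : ℝ)
    (hωp : ωp = (1 / 2) * Real.sqrt (1 + r)) (hωm : ωm = (1 / 2) * Real.sqrt (1 - r))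
    (Φ01 Φ10 : L) (h : L →ₗ[ℝ] L)
    (hnorm01 : ⟪Φ01, Φ01⟫ = 1) (hnorm10 : ⟪Φ10, Φ10⟫ = 1) (horth : ⟪Φ01, Φ10⟫ = 0)
    (heig01 : h Φ01 = (E00 + ωm / a) • Φ01)
    (heig10 : h Φ10 = (E00 + ωp / a) • Φ10)
    (ΦA ΦB : L)
    (hΦA : ΦA = Real.sin (φ / 2) • Φ01 - Real.cos (φ / 2) • Φ10)
    (hΦB : ΦB = Real.cos (φ / 2) • Φ01 + Real.sin (φ / 2) • Φ10) :
    ⟪ΦB, h ΦA⟫ = a⁻¹ * (Real.sin (φ / 2) * Real.cos (φ / 2) * (ωm - ωp)) ∧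
    (x₂ ≠ 0 → ⟪ΦB, h ΦA⟫ ≠ 0) ∧
    -- the scalar function of `x` appearing above is `−x₂/4 + O(|x|³)` near the origin
    (fun x : ℝ × ℝ =>
        Real.sin (Complex.arg ((x.1 : ℂ) + x.2 * Complex.I) / 2) *
            Real.cos (Complex.arg ((x.1 : ℂ) + x.2 * Complex.I) / 2) *
            ((1 / 2) * Real.sqrt (1 - Real.sqrt (x.1 ^ 2 + x.2 ^ 2)) -
              (1 / 2) * Real.sqrt (1 + Real.sqrt (x.1 ^ 2 + x.2 ^ 2)))
          + x.2 / 4)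
      =O[𝓝 (0 : ℝ × ℝ)] (fun x => Real.sqrt (x.1 ^ 2 + x.2 ^ 2) ^ 3) := by
  have horth' : ⟪Φ10, Φ01⟫ = (0:ℝ) := by rw [real_inner_comm]; exact horth
  have hval : ⟪ΦB, h ΦA⟫ = a⁻¹ * (Real.sin (φ / 2) * Real.cos (φ / 2) * (ωm - ωp)) := by
    rw [hΦA, hΦB, map_sub, map_smul, map_smul, heig01, heig10]
    simp only [inner_add_left, inner_sub_right, real_inner_smul_left, real_inner_smul_right,
      hnorm01, hnorm10, horth, horth']
    field_simp
    ring
  refine ⟨hval, ?_, ?_⟩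
  · intro hx2ne
    rw [hval]
    have hsinφ : Real.sin φ ≠ 0 := by
      intro hc; apply hx2ne; rw [hx₂, hc, mul_zero]
    have hsc : Real.sin (φ / 2) * Real.cos (φ / 2) ≠ 0 := by
      have := Real.sin_two_mul (φ / 2)
      rw [show 2 * (φ / 2) = φ by ring] at this
      intro hc; apply hsinφ; rw [this, mul_assoc, hc, mul_zero]
    have hlt : ωm < ωp := by
      rw [hωm, hωp]
      have : Real.sqrt (1 - r) < Real.sqrt (1 + r) :=
        Real.sqrt_lt_sqrt (by linarith) (by linarith)
      linarith
    exact mul_ne_zero (inv_ne_zero (ne_of_gt ha)) (mul_ne_zero hsc (sub_ne_zero.2 (ne_of_lt hlt)))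
  · rw [isBigO_iff]
    refine ⟨1, ?_⟩
    filter_upwards [Metric.ball_mem_nhds (0 : ℝ × ℝ) (by norm_num : (0:ℝ) < 1/2)] with x hx
    have hxn : ‖x‖ < 1/2 := by simpa [dist_zero_right] using hx
    have h1 : |x.1| ≤ ‖x‖ := by
      simpa using norm_fst_le x
    have h2 : |x.2| ≤ ‖x‖ := by
      simpa using norm_snd_le x
    have hle : Real.sqrt (x.1 ^ 2 + x.2 ^ 2) ≤ 1 := by
      have : Real.sqrt (x.1 ^ 2 + x.2 ^ 2) ≤ Real.sqrt 1 := by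
        apply Real.sqrt_le_sqrt
        nlinarith [abs_nonneg x.1, abs_nonneg x.2, sq_abs x.1, sq_abs x.2, norm_nonneg x]
      simpa using this
    have hb := aux_bound x.1 x.2 hle
    have hh : |Real.sqrt (x.1 ^ 2 + x.2 ^ 2)| = Real.sqrt (x.1 ^ 2 + x.2 ^ 2) :=
      abs_of_nonneg (Real.sqrt_nonneg _)
    simpa [Real.norm_eq_abs, abs_pow, hh] using hb
end
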